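/- Let 0 < α < 1 and let f_α be analytic on the unit disk 𝔻 with f_α(0) = 0, f_α'(0) = 1, f_α' nonvanishing, and satisfying 1 + z f_α''(z)/f_α'(z) = ((1+z²)/(1−z²))^α (principal branch) for all z ∈ 𝔻. Then the Schwarzian derivative of f_α at the origin equals S_{f_α}(0) = 2α; consequently sup_{z∈𝔻}(1−|z|²)²|S_{f_α}(z)| ≥ 2α, so the bound ‖S_f‖ ≤ 2α for strongly convex functions of order α is sharp. -/

import Mathlib

set_option maxHeartbeats 1000000


open Metric

/-- Sharpness of the bound `‖S_f‖ ≤ 2α` for strongly convex functions of order `α`: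
the function `f_α` with `1 + z f_α''/f_α' = ((1+z²)/(1-z²))^α` satisfies
`S_{f_α}(0) = 2α`, and hence `sup_{z∈𝔻} (1-|z|²)² |S_{f_α}(z)| ≥ 2α`. -/
theorem schwarzian_norm_sharp_strongly_convex (α : ℝ) (hα0 : 0 < α) (hα1 : α < 1)
    (f : ℂ → ℂ) (hf : DifferentiableOn ℂ f (ball (0:ℂ) 1))
    (hf0 : f 0 = 0) (hf1 : deriv f 0 = 1)
    (hf' : ∀ z ∈ ball (0:ℂ) 1, deriv f z ≠ 0)
    (hode : ∀ z ∈ ball (0:ℂ) 1,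
      1 + z * deriv (deriv f) z / deriv f z
        = Complex.exp ((α : ℂ) * Complex.log ((1 + z ^ 2) / (1 - z ^ 2)))) :
    (deriv (deriv (deriv f)) 0 / deriv f 0
        - (3 / 2) * (deriv (deriv f) 0 / deriv f 0) ^ 2 = (2 * α : ℂ)) ∧
    2 * α ≤ sSup {r : ℝ | ∃ z ∈ ball (0:ℂ) 1,
      r = (1 - ‖z‖ ^ 2) ^ 2 *
        ‖deriv (deriv (deriv f)) z / deriv f z
          - (3 / 2) * (deriv (deriv f) z / deriv f z) ^ 2‖} := by
  set D := ball (0:ℂ) 1 with hD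
  set g : ℂ → ℂ := fun w => Complex.exp ((α : ℂ) * Complex.log ((1 + w ^ 2) / (1 - w ^ 2))) with hg
  set G : ℂ → ℂ := fun w => (α:ℂ) * g w * (4 * w / ((1 + w^2) * (1 - w^2))) with hGdef
  set h : ℂ → ℂ := fun w => deriv (deriv f) w / deriv f w with hh
  -- basic nonvanishing facts
  have hbasic : ∀ z ∈ D, (1 - z^2) ≠ 0 ∧ (1 + z^2) ≠ 0 ∧ (1 + z^2)/(1-z^2) ∈ Complex.slitPlane := by
    intro z hz
    simp only [hD, mem_ball, dist_zero_right] at hz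
    have habs : ‖z^2‖ < 1 := by
      rw [norm_pow]; nlinarith [norm_nonneg z]
    have hb : (1 - z^2) ≠ 0 := by
      intro h
      have : z^2 = 1 := by linear_combination -h
      rw [this] at habs; simp at habs
    have ha : (1 + z^2) ≠ 0 := by
      intro h
      have : z^2 = -1 := by linear_combination h
      rw [this] at habs; simp at habs
    refine ⟨hb, ha, ?_⟩
    rw [Complex.mem_slitPlane_iff]
    left
    rw [Complex.div_re, ← add_div]
    apply div_pos _ ((Complex.normSq_pos).2 hb)
    have hnum : (1+z^2).re * (1-z^2).re + (1+z^2).im * (1-z^2).im = 1 - Complex.normSq (z^2) := by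
      simp [Complex.normSq_apply, Complex.add_re, Complex.sub_re, Complex.add_im, Complex.sub_im]
      ring
    rw [hnum, Complex.normSq_eq_norm_sq]
    nlinarith [norm_nonneg (z^2)]
  -- derivative of g
  have hasg : ∀ z ∈ D, HasDerivAt g (G z) z := by
    intro z hz
    obtain ⟨hb, ha, hs⟩ := hbasic z hz
    have h1 : HasDerivAt (fun w : ℂ => 1 + w^2) (2*z) z := by
      simpa using (hasDerivAt_pow 2 z).const_add 1
    have h2 : HasDerivAt (fun w : ℂ => 1 - w^2) (-(2*z)) z := by
      simpa using (hasDerivAt_pow 2 z).const_sub 1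
    have hw : HasDerivAt (fun w : ℂ => (1 + w^2)/(1 - w^2)) (4*z/(1-z^2)^2) z := by
      have := h1.div h2 hb
      convert this using 1
      all_goals first | rfl | ring
    have he := ((hw.clog hs).const_mul (α:ℂ)).cexp
    convert he using 1
    all_goals first | rfl | (simp only [hGdef, hg]; field_simp)
  -- analyticity
  have hopen : IsOpen D := isOpen_ball
  have hA : AnalyticOnNhd ℂ f D := hf.analyticOnNhd hopen
  have hA1 : AnalyticOnNhd ℂ (deriv f) D := hA.deriv
  have hA2 : AnalyticOnNhd ℂ (deriv (deriv f)) D := hA1.deriv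
  have hA3 : AnalyticOnNhd ℂ (deriv (deriv (deriv f))) D := hA2.deriv
  have hH : AnalyticOnNhd ℂ h D := hA2.div hA1 hf'
  have hH' : AnalyticOnNhd ℂ (deriv h) D := hH.deriv
  -- the ODE rewritten
  have key : ∀ z ∈ D, z * h z = g z - 1 := by
    intro z hz
    have := hode z hz
    simp only [hh, hg]
    rw [mul_div_assoc] at this
    linear_combination this
  have h0D : (0:ℂ) ∈ D := mem_ball_self zero_lt_one
  -- first differentiation of the ODE
  have step1 : ∀ z ∈ D, h z + z * deriv h z = G z := by
    intro z hz
    have e1 : (fun w => w * h w) =ᶠ[nhds z] (fun w => g w - 1) := by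
      filter_upwards [hopen.mem_nhds hz] with w hw using key w hw
    have e2 := e1.deriv_eq
    have L : HasDerivAt (fun w => w * h w) (h z + z * deriv h z) z := by
      have := (hasDerivAt_id z).mul ((hH z hz).differentiableAt.hasDerivAt)
      simp only [id_eq, one_mul] at this
      exact this
    rw [L.deriv, deriv_sub_const, (hasg z hz).deriv] at e2
    exact e2
  -- h 0 = 0
  have hG0 : G 0 = 0 := by simp [hGdef]
  have hh0 : h 0 = 0 := by
    have := step1 0 h0D
    rw [hG0] at this
    simpa using this
  have hf2 : deriv (deriv f) 0 = 0 := by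
    have : h 0 = deriv (deriv f) 0 := by simp only [hh, hf1, div_one]
    rw [← this, hh0]
  -- second differentiation
  have hg0 : g 0 = 1 := by simp [hg]
  have hasG0 : HasDerivAt G ((α:ℂ) * 4) 0 := by
    have hg0' : HasDerivAt (fun w => (α:ℂ) * g w) ((α:ℂ) * G 0) 0 := (hasg 0 h0D).const_mul _
    have hnum : HasDerivAt (fun w : ℂ => 4 * w) (4:ℂ) 0 := by
      simpa using (hasDerivAt_id (0:ℂ)).const_mul (4:ℂ)
    have hd1 : HasDerivAt (fun w : ℂ => 1 + w^2) (2*0) 0 := by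
      simpa using (hasDerivAt_pow 2 (0:ℂ)).const_add 1
    have hd2 : HasDerivAt (fun w : ℂ => 1 - w^2) (-(2*0)) 0 := by
      simpa using (hasDerivAt_pow 2 (0:ℂ)).const_sub 1
    have hden : HasDerivAt (fun w : ℂ => (1 + w^2) * (1 - w^2)) 0 0 := by
      have := hd1.mul hd2
      convert this using 1
      all_goals first | rfl | norm_num
    have hv : HasDerivAt (fun w : ℂ => 4 * w / ((1 + w^2) * (1 - w^2))) (4:ℂ) 0 := by
      have := hnum.div hden (by norm_num)
      convert this using 1
      all_goals first | rfl | norm_num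
    have H := hg0'.mul hv
    rw [hG0] at H
    simp only [hg0] at H
    convert H using 1
    all_goals first | rfl | norm_num
  have step2 : deriv h 0 = 2 * α := by
    have e1 : (fun w => h w + w * deriv h w) =ᶠ[nhds 0] G := by
      filter_upwards [hopen.mem_nhds h0D] with w hw using step1 w hw
    have e2 := e1.deriv_eq
    have L2 := ((hH 0 h0D).differentiableAt.hasDerivAt).add
      ((hasDerivAt_id (0:ℂ)).mul ((hH' 0 h0D).differentiableAt.hasDerivAt))
    simp only [id_eq, one_mul, zero_mul, add_zero] at L2
    rw [show (fun w => h w + w * deriv h w) = h + id * deriv h from rfl, L2.deriv, hasG0.deriv] at e2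
    linear_combination e2 / 2
  -- compute deriv h explicitly
  have derivh : ∀ z ∈ D, deriv h z = (deriv (deriv (deriv f)) z * deriv f z
      - deriv (deriv f) z * deriv (deriv f) z) / (deriv f z)^2 := by
    intro z hz
    rw [hh]
    rw [show (fun w => deriv (deriv f) w / deriv f w) = deriv (deriv f) / deriv f from rfl, deriv_div ((hA2 z hz).differentiableAt) ((hA1 z hz).differentiableAt) (hf' z hz)]
  have hf3 : deriv (deriv (deriv f)) 0 = 2 * α := by
    have := derivh 0 h0D
    rw [step2, hf1, hf2] at this
    simpa using this.symm
  have goal1 : deriv (deriv (deriv f)) 0 / deriv f 0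
      - (3 / 2) * (deriv (deriv f) 0 / deriv f 0) ^ 2 = (2 * α : ℂ) := by
    rw [hf3, hf1, hf2]
    norm_num
  refine ⟨goal1, ?_⟩
  -- link expression to h
  have hψ : ∀ z ∈ D, deriv (deriv (deriv f)) z / deriv f z
      - (3 / 2) * (deriv (deriv f) z / deriv f z) ^ 2 = deriv h z - (1/2) * (h z)^2 := by
    intro z hz
    rw [derivh z hz]
    have h1 := hf' z hz
    simp only [hh]
    field_simp
    ring
  -- membership of 2α
  have hmem : (2*α : ℝ) ∈ {r : ℝ | ∃ z ∈ D,
      r = (1 - ‖z‖ ^ 2) ^ 2 *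
        ‖deriv (deriv (deriv f)) z / deriv f z
          - (3 / 2) * (deriv (deriv f) z / deriv f z) ^ 2‖} := by
    refine ⟨0, h0D, ?_⟩
    rw [goal1]
    rw [show ((2:ℂ) * α) = ((2*α : ℝ) : ℂ) by push_cast; ring]
    rw [Complex.norm_real, Real.norm_eq_abs, abs_of_pos (by linarith)]
    simp
  -- boundedness
  have hbdd : BddAbove {r : ℝ | ∃ z ∈ D,
      r = (1 - ‖z‖ ^ 2) ^ 2 *
        ‖deriv (deriv (deriv f)) z / deriv f z
          - (3 / 2) * (deriv (deriv f) z / deriv f z) ^ 2‖} := by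
    have hKsub : closedBall (0:ℂ) (1/2) ⊆ D := closedBall_subset_ball (by norm_num)
    have hcont : ContinuousOn (fun z => deriv (deriv (deriv f)) z / deriv f z
        - (3 / 2) * (deriv (deriv f) z / deriv f z) ^ 2) D := by
      apply ContinuousOn.sub
      · exact hA3.continuousOn.div hA1.continuousOn hf'
      · exact continuousOn_const.mul ((hA2.continuousOn.div hA1.continuousOn hf').pow 2)
    obtain ⟨C, hC⟩ := (isCompact_closedBall (0:ℂ) (1/2)).exists_bound_of_continuousOn
      (hcont.mono hKsub)
    refine ⟨max C 100, ?_⟩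
    rintro r ⟨z, hz, rfl⟩
    have hz1 : ‖z‖ < 1 := by
      simpa [hD, mem_ball, dist_zero_right] using hz
    have hzn : 0 ≤ ‖z‖ := norm_nonneg z
    have ht0 : 0 < 1 - ‖z‖^2 := by nlinarith
    have ht1 : (1 - ‖z‖^2)^2 ≤ 1 := by nlinarith
    by_cases hcase : ‖z‖ ≤ 1/2
    · have hzK : z ∈ closedBall (0:ℂ) (1/2) := by
        simpa [mem_closedBall, dist_zero_right] using hcase
      have hCz := hC z hzK
      have habsnn : 0 ≤ ‖deriv (deriv (deriv f)) z / deriv f z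
          - (3 / 2) * (deriv (deriv f) z / deriv f z) ^ 2‖ := norm_nonneg _
      have : (1 - ‖z‖ ^ 2) ^ 2 * ‖deriv (deriv (deriv f)) z / deriv f z
          - (3 / 2) * (deriv (deriv f) z / deriv f z) ^ 2‖ ≤ C := by
        nlinarith
      exact le_trans this (le_max_left _ _)
    · push_neg at hcase
      obtain ⟨hb, ha, _⟩ := hbasic z hz
      have hzne : z ≠ 0 := by
        intro h; rw [h] at hcase; simp at hcase; linarith
      set a := ‖1+z^2‖ with hadef
      set b := ‖1-z^2‖ with hbdef
      have ha0 : 0 < a := norm_pos_iff.2 ha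
      have hb0 : 0 < b := norm_pos_iff.2 hb
      have hz2 : ‖z^2‖ = ‖z‖^2 := norm_pow _ _
      have ha2 : a ≤ 2 := by
        have := norm_add_le (1:ℂ) (z^2)
        rw [hz2] at this; simp only [norm_one] at this
        nlinarith
      have hb2 : b ≤ 2 := by
        have := norm_add_le (1:ℂ) (-(z^2))
        rw [norm_neg, hz2] at this
        simp only [norm_one] at this
        have e : (1:ℂ) + -(z^2) = 1 - z^2 := by ring
        rw [e] at this
        nlinarith
      have hta : 1 - ‖z‖^2 ≤ a := by
        have e := norm_add_le (1+z^2) (-(z^2))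
        rw [show (1+z^2) + (-(z^2)) = (1:ℂ) by ring, norm_neg, hz2] at e
        simp only [norm_one] at e
        linarith
      have htb : 1 - ‖z‖^2 ≤ b := by
        have e := norm_add_le (1-z^2) (z^2)
        rw [show (1-z^2) + z^2 = (1:ℂ) by ring, hz2] at e
        simp only [norm_one] at e
        linarith
      -- |g z| ≤ 1 + a/b
      have hgle : ‖g z‖ ≤ 1 + a/b := by
        have hW0 : 0 < a/b := div_pos ha0 hb0
        have habsg : ‖g z‖ = (a/b)^α := by
          rw [hg]
          simp only []
          rw [Complex.norm_exp, Complex.re_ofReal_mul, Complex.log_re, norm_div]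
          rw [Real.rpow_def_of_pos hW0, mul_comm]
        rw [habsg]
        rcases le_total (a/b) 1 with hle | hle
        · have := Real.rpow_le_one (le_of_lt hW0) hle (le_of_lt hα0)
          linarith
        · have := Real.rpow_le_rpow_of_exponent_le hle hα1.le
          rw [Real.rpow_one] at this
          linarith
      -- |h z| ≤ 2(2 + a/b)
      have hhz : ‖h z‖ ≤ 2*(2 + a/b) := by
        have e : ‖z‖ * ‖h z‖ = ‖g z - 1‖ := by
          rw [← norm_mul, key z hz]
        have e2 : ‖g z - 1‖ ≤ ‖g z‖ + 1 := by
          have := norm_sub_le_norm_sub_add_norm_sub (g z) 0 1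
          rw [sub_zero, zero_sub, norm_neg, norm_one] at this
          exact this
        have e3 : (1/2) * ‖h z‖ ≤ ‖z‖ * ‖h z‖ :=
          mul_le_mul_of_nonneg_right hcase.le (norm_nonneg (h z))
        linarith [e.le, e.ge]
      -- |G z| ≤ 4(1 + a/b)/(a b)
      have hGz : ‖G z‖ ≤ 4*(1 + a/b)/(a*b) := by
        have e : ‖G z‖ = α * ‖g z‖ * (4 * ‖z‖/(a*b)) := by
          simp only [hGdef, hadef, hbdef]
          rw [norm_mul, norm_mul, norm_div, norm_mul, norm_mul]
          rw [Complex.norm_real, Real.norm_eq_abs, abs_of_pos hα0]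
          norm_num
        rw [e]
        have hle1 : α * ‖g z‖ * (4 * ‖z‖/(a*b))
            ≤ 1 * (1 + a/b) * (4 * 1/(a*b)) := by
          gcongr
          all_goals first
            | exact norm_nonneg _
            | linarith
        calc α * ‖g z‖ * (4 * ‖z‖/(a*b))
            ≤ 1 * (1 + a/b) * (4 * 1/(a*b)) := hle1
          _ = 4*(1 + a/b)/(a*b) := by ring
      -- |deriv h z| bound
      have hdh : ‖deriv h z‖ ≤ 2*(‖G z‖ + ‖h z‖) := by
        have e0 : z * deriv h z = G z - h z := by
          have := step1 z hz; linear_combination this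
        have e : ‖z‖ * ‖deriv h z‖ = ‖G z - h z‖ := by
          rw [← norm_mul, e0]
        have e2 : ‖G z - h z‖ ≤ ‖G z‖ + ‖h z‖ := by
          have := norm_sub_le_norm_sub_add_norm_sub (G z) 0 (h z)
          rw [sub_zero, zero_sub, norm_neg] at this
          exact this
        have e3 : (1/2) * ‖deriv h z‖ ≤ ‖z‖ * ‖deriv h z‖ :=
          mul_le_mul_of_nonneg_right hcase.le (norm_nonneg (deriv h z))
        linarith [e.le, e.ge]
      -- arithmetic
      set t := 1 - ‖z‖^2 with htdef
      have ht2 : t^2 ≤ 1 := ht1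
      have hq1 : t^2 ≤ a*b := by
        rw [sq]; exact mul_le_mul hta htb ht0.le ha0.le
      have hq2 : t^2 ≤ b^2 := pow_le_pow_left₀ ht0.le htb 2
      have i1 : t^2 * ((1+a/b)/(a*b)) ≤ 2 := by
        rw [show ((1+a/b)/(a*b)) = (b+a)/(a*b^2) by
          rw [div_eq_div_iff (by positivity) (by positivity)]; field_simp]
        rw [mul_div_assoc']
        rw [div_le_iff₀ (by positivity)]
        nlinarith [mul_le_mul_of_nonneg_right hq1 hb0.le,
          mul_le_mul_of_nonneg_right hq2 ha0.le]
      have i2 : t^2 * (2 + a/b) ≤ 6 := by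
        rw [show (2 + a/b) = (2*b+a)/b by field_simp]
        rw [mul_div_assoc']
        rw [div_le_iff₀ hb0]
        nlinarith [mul_le_mul_of_nonneg_right hq1 ha0.le,
          mul_le_mul_of_nonneg_right hq2 ha0.le]
      have i3 : t^2 * (2 + a/b)^2 ≤ 24 := by
        rw [show (2 + a/b)^2 = (2*b+a)^2/b^2 by
          rw [show (2 + a/b) = (2*b+a)/b by field_simp, div_pow]]
        rw [mul_div_assoc']
        rw [div_le_iff₀ (by positivity)]
        have hab4 : a*b ≤ 4 := by nlinarith
        have ha4 : a^2 ≤ 4 := by nlinarith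
        have k1 : t^2*b^2 ≤ b^2 := by nlinarith [mul_le_mul_of_nonneg_right ht2 (sq_nonneg b)]
        have k2 : t^2*(a*b) ≤ 4*b^2 := by
          calc t^2*(a*b) ≤ b^2*(a*b) :=
                mul_le_mul_of_nonneg_right hq2 (mul_nonneg ha0.le hb0.le)
            _ ≤ b^2*4 := mul_le_mul_of_nonneg_left hab4 (sq_nonneg b)
            _ = 4*b^2 := by ring
        have k3 : t^2*a^2 ≤ 4*b^2 := by
          calc t^2*a^2 ≤ b^2*a^2 := mul_le_mul_of_nonneg_right hq2 (sq_nonneg a)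
            _ ≤ b^2*4 := mul_le_mul_of_nonneg_left ha4 (sq_nonneg b)
            _ = 4*b^2 := by ring
        nlinarith [k1, k2, k3]
      -- assemble
      have habsψ : ‖deriv (deriv (deriv f)) z / deriv f z
          - (3 / 2) * (deriv (deriv f) z / deriv f z) ^ 2‖
          ≤ ‖deriv h z‖ + (1/2) * (‖h z‖)^2 := by
        rw [hψ z hz]
        have e2 : ‖deriv h z - (1/2) * (h z)^2‖
            ≤ ‖deriv h z‖ + ‖(1/2) * (h z)^2‖ := by
          have := norm_sub_le_norm_sub_add_norm_sub (deriv h z) 0 ((1/2) * (h z)^2)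
          rw [sub_zero, zero_sub, norm_neg] at this
          exact this
        have e3 : ‖(1/2 : ℂ) * (h z)^2‖ = (1/2) * (‖h z‖)^2 := by
          rw [norm_mul, norm_pow]
          norm_num
        rw [e3] at e2
        exact e2
      have inner : ‖deriv (deriv (deriv f)) z / deriv f z
          - (3 / 2) * (deriv (deriv f) z / deriv f z) ^ 2‖
          ≤ 8*((1+a/b)/(a*b)) + 4*(2+a/b) + 2*(2+a/b)^2 := by
        have hAh : 0 ≤ ‖h z‖ := norm_nonneg _
        have hsq : (‖h z‖)^2 ≤ (2*(2+a/b))^2 := by nlinarith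
        have hGz' : ‖G z‖ ≤ 4*((1+a/b)/(a*b)) := by
          rw [show 4*((1+a/b)/(a*b)) = 4*(1+a/b)/(a*b) by ring]
          exact hGz
        nlinarith [habsψ, hdh, hGz']
      calc t^2 * ‖deriv (deriv (deriv f)) z / deriv f z
          - (3 / 2) * (deriv (deriv f) z / deriv f z) ^ 2‖
          ≤ t^2 * (8*((1+a/b)/(a*b)) + 4*(2+a/b) + 2*(2+a/b)^2) := by
            apply mul_le_mul_of_nonneg_left inner (sq_nonneg t)
        _ = 8*(t^2*((1+a/b)/(a*b))) + 4*(t^2*(2+a/b)) + 2*(t^2*(2+a/b)^2) := by ring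
        _ ≤ 8*2 + 4*6 + 2*24 := by linarith [i1, i2, i3]
        _ ≤ 100 := by norm_num
        _ ≤ max C 100 := le_max_right _ _
  exact le_csSup hbdd hmem
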